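/- arXiv:2210.08839 — 2 statements merged into one kernel-verified Lean document; each statement's English description precedes it below -/
import Mathlib

section
/- The modified Gram-Schmidt projector admits a triangular compact form: let q₁, …, qₙ be vectors in ℝᵐ with qᵢᵀqᵢ = 1 for all i, let Q be the m×n matrix with columns q₁, …, qₙ, and let L be the strictly lower triangular part of QᵀQ (so L_{ij} = qᵢᵀqⱼ for i > j and L_{ij} = 0 otherwise). Then Iₙ + L is invertible and (I_m − qₙqₙᵀ)···(I_m − q₂q₂ᵀ)(I_m − q₁q₁ᵀ) = I_m − Q·(Iₙ + L)⁻¹·Qᵀ. -/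
open Matrix

theorem mgs_aux (m : ℕ) : ∀ (n : ℕ) (q : Fin n → (Fin m → ℝ)),
    ∃ T : Matrix (Fin n) (Fin n) ℝ,
      T * ((1 : Matrix (Fin n) (Fin n) ℝ) +
          Matrix.of (fun i j : Fin n => if (j : ℕ) < (i : ℕ) then q i ⬝ᵥ q j else 0)) = 1 ∧
      ((List.ofFn fun i : Fin n =>
          (1 : Matrix (Fin m) (Fin m) ℝ) - vecMulVec (q i) (q i)).reverse).prod =
        1 - (Matrix.of fun a (i : Fin n) => q i a) * T *
            (Matrix.of fun a (i : Fin n) => q i a)ᵀ := by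
  intro n
  induction n with
  | zero =>
    intro q
    refine ⟨1, Subsingleton.elim _ _, ?_⟩
    ext a b
    simp [Matrix.mul_apply, Matrix.one_apply]
  | succ n ih =>
    intro q
    obtain ⟨T', hT1, hT2⟩ := ih (fun i => q i.castSucc)
    set q' : Fin n → (Fin m → ℝ) := fun i => q i.castSucc with hq'
    set L' : Matrix (Fin n) (Fin n) ℝ :=
      Matrix.of (fun i j : Fin n => if (j : ℕ) < (i : ℕ) then q' i ⬝ᵥ q' j else 0) with hL'
    set Q' : Matrix (Fin m) (Fin n) ℝ := Matrix.of fun a (i : Fin n) => q' i a with hQ'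
    set v : Fin m → ℝ := q (Fin.last n) with hv
    set u : Fin n → ℝ := fun k => v ⬝ᵥ q' k with hu
    set w : Fin n → ℝ := -(u ᵥ* T') with hw
    have hwL : w ᵥ* ((1 : Matrix (Fin n) (Fin n) ℝ) + L') = -u := by
      rw [hw, Matrix.neg_vecMul, Matrix.vecMul_vecMul, hT1, Matrix.vecMul_one]
    have hvQ : v ᵥ* Q' = u := by
      ext j; simp [Matrix.vecMul, dotProduct, hu, hQ', mul_comm]
    set T : Matrix (Fin (n+1)) (Fin (n+1)) ℝ :=
      Matrix.of fun i => Fin.lastCases (Fin.snoc w 1) (fun i' => Fin.snoc (T' i') 0) i with hT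
    have hTcc : ∀ i' k : Fin n, T i'.castSucc k.castSucc = T' i' k := by
      intro i' k; simp [hT]
    have hTcl : ∀ i' : Fin n, T i'.castSucc (Fin.last n) = 0 := by
      intro i'; simp [hT]
    have hTlc : ∀ k : Fin n, T (Fin.last n) k.castSucc = w k := by
      intro k; simp [hT]
    have hTll : T (Fin.last n) (Fin.last n) = 1 := by simp [hT]
    have hnl : ∀ x : Fin n, ¬ ((n:ℕ) < (x:ℕ)) := fun x => by omega
    refine ⟨T, ?_, ?_⟩
    · ext i j
      induction i using Fin.lastCases with
      | last =>
        induction j using Fin.lastCases with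
        | last =>
          simp only [Matrix.mul_apply, Fin.sum_univ_castSucc, Matrix.of_apply, Fin.lastCases_last,
            Fin.lastCases_castSucc, Fin.snoc_castSucc, Fin.snoc_last, Matrix.add_apply,
            Matrix.one_apply, Fin.coe_castSucc, Fin.val_last, hTlc, hTll]
          simp [hnl, Fin.castSucc_lt_last, (Fin.castSucc_lt_last _).ne]
        | cast j' =>
          have key := congrFun hwL j'
          simp only [Matrix.vecMul, dotProduct, Matrix.add_apply, Matrix.one_apply,
            Matrix.of_apply, hL', hq', Pi.neg_apply, hu, hv] at key
          simp only [Matrix.mul_apply, Fin.sum_univ_castSucc, Matrix.of_apply, Fin.lastCases_last,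
            Fin.lastCases_castSucc, Fin.snoc_castSucc, Fin.snoc_last, Matrix.add_apply,
            Matrix.one_apply, Fin.coe_castSucc, Fin.val_last, hTlc, hTll, Fin.castSucc_inj,
            dotProduct, hu, hq', hv, if_pos j'.is_lt,
            if_neg (Fin.castSucc_lt_last j').ne', one_mul] at key ⊢
          linarith [key]
      | cast i' =>
        induction j using Fin.lastCases with
        | last =>
          simp only [Matrix.mul_apply, Fin.sum_univ_castSucc, Matrix.of_apply, Fin.lastCases_last,
            Fin.lastCases_castSucc, Fin.snoc_castSucc, Fin.snoc_last, Matrix.add_apply,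
            Matrix.one_apply, Fin.coe_castSucc, Fin.val_last, hTcc, hTcl]
          simp [hnl, (Fin.castSucc_lt_last _).ne]
        | cast j' =>
          have key := congrFun (congrFun hT1 i') j'
          simp only [Matrix.mul_apply, Matrix.add_apply, Matrix.one_apply, Matrix.of_apply,
            hL', hq', hu] at key
          simp only [Matrix.mul_apply, Fin.sum_univ_castSucc, Matrix.of_apply, Fin.lastCases_last,
            Fin.lastCases_castSucc, Fin.snoc_castSucc, Fin.snoc_last, Matrix.add_apply,
            Matrix.one_apply, Fin.coe_castSucc, Fin.val_last, hTcc, hTcl, Fin.castSucc_inj,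
            hu, hq'] at key ⊢
          rw [zero_mul, add_zero]
          exact key
    · have hofn : (List.ofFn fun i : Fin (n+1) =>
          (1 : Matrix (Fin m) (Fin m) ℝ) - vecMulVec (q i) (q i))
          = (List.ofFn fun i : Fin n =>
              (1 : Matrix (Fin m) (Fin m) ℝ) - vecMulVec (q' i) (q' i)).concat
            ((1 : Matrix (Fin m) (Fin m) ℝ) - vecMulVec v v) := by
        rw [List.ofFn_succ']
      rw [hofn, List.concat_eq_append, List.reverse_append, List.reverse_singleton,
        List.singleton_append, List.prod_cons]
      have hT2' : (List.ofFn fun i : Fin n =>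
          (1 : Matrix (Fin m) (Fin m) ℝ) - vecMulVec (q' i) (q' i)).reverse.prod
          = 1 - Q' * T' * Q'ᵀ := by
        rw [← hT2]
      rw [hT2']
      have hwQ : w ᵥ* Q'ᵀ = -(v ᵥ* (Q' * T' * Q'ᵀ)) := by
        rw [hw, Matrix.neg_vecMul, ← Matrix.vecMul_vecMul, ← Matrix.vecMul_vecMul, hvQ]
      have h1 : (Matrix.of fun a (i : Fin (n+1)) => q i a) * T =
          Matrix.of fun a j => Fin.lastCases (motive := fun _ => ℝ) (v a)
            (fun j' => (Q' * T') a j' + v a * w j') j := by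
        ext a j
        induction j using Fin.lastCases with
        | last =>
          simp [Matrix.mul_apply, Fin.sum_univ_castSucc, hTcl, hTll, hq', hv]
        | cast j' =>
          simp [Matrix.mul_apply, Fin.sum_univ_castSucc, hTcc, hTlc, hq', hv, hQ']
      have h2 : (Matrix.of fun a j => Fin.lastCases (motive := fun _ => ℝ) (v a)
            (fun j' => (Q' * T') a j' + v a * w j') j) *
            (Matrix.of fun a (i : Fin (n+1)) => q i a)ᵀ =
          Q' * T' * Q'ᵀ + vecMulVec v (w ᵥ* Q'ᵀ) + vecMulVec v v := by
        ext a b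
        simp [Matrix.mul_apply, Fin.sum_univ_castSucc, Matrix.vecMulVec_apply,
          Matrix.vecMul, dotProduct, hq', hv, hQ', add_mul,
          Finset.sum_add_distrib, Finset.mul_sum, mul_assoc]
      have hvvm : vecMulVec v (v ᵥ* (Q' * T' * Q'ᵀ)) = vecMulVec v v * (Q' * T' * Q'ᵀ) := by
        ext a b
        simp [Matrix.mul_apply, Matrix.vecMulVec_apply, Matrix.vecMul, dotProduct,
          Finset.mul_sum, mul_assoc]
      have hvneg : vecMulVec v (-(v ᵥ* (Q' * T' * Q'ᵀ))) =
          -vecMulVec v (v ᵥ* (Q' * T' * Q'ᵀ)) := by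
        ext a b; simp [Matrix.vecMulVec_apply]
      rw [Matrix.mul_assoc, h1, h2, hwQ, hvneg, hvvm]
      rw [Matrix.sub_mul, Matrix.mul_sub, Matrix.mul_sub, one_mul, mul_one]
      simp only [Matrix.mul_assoc, one_mul]
      abel

/-- The modified Gram-Schmidt projector admits a triangular compact form. -/
theorem mgs_compact_projector_form
    (m n : ℕ)
    (q : Fin n → (Fin m → ℝ)) (hq : ∀ i, q i ⬝ᵥ q i = 1)
    (Q : Matrix (Fin m) (Fin n) ℝ) (hQ : Q = Matrix.of fun i j => q j i)
    (L : Matrix (Fin n) (Fin n) ℝ)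
    (hL : L = Matrix.of fun i j : Fin n =>
        if (j : ℕ) < (i : ℕ) then (Qᵀ * Q) i j else 0) :
    IsUnit ((1 : Matrix (Fin n) (Fin n) ℝ) + L) ∧
      ((List.ofFn fun i : Fin n =>
          (1 : Matrix (Fin m) (Fin m) ℝ) - vecMulVec (q i) (q i)).reverse).prod =
        1 - Q * ((1 : Matrix (Fin n) (Fin n) ℝ) + L)⁻¹ * Qᵀ := by
  obtain ⟨T, h1, h2⟩ := mgs_aux m n q
  have hLeq : L = Matrix.of (fun i j : Fin n =>
      if (j : ℕ) < (i : ℕ) then q i ⬝ᵥ q j else 0) := by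
    rw [hL]
    ext i j
    by_cases h : (j : ℕ) < (i : ℕ) <;>
      simp [h, hQ, Matrix.mul_apply, dotProduct]
  rw [← hLeq] at h1
  have h1' : ((1 : Matrix (Fin n) (Fin n) ℝ) + L) * T = 1 :=
    mul_eq_one_comm.mp h1
  refine ⟨⟨⟨(1 : Matrix (Fin n) (Fin n) ℝ) + L, T, h1', h1⟩, rfl⟩, ?_⟩
  rw [Matrix.inv_eq_right_inv h1', hQ]
  exact h2
end

section
/- Block two-term compact projector identity: let Q₁ be a real m×n₁ matrix with Q₁ᵀQ₁ = I_{n₁} and Q₂ a real m×n₂ matrix with Q₂ᵀQ₂ = I_{n₂}. Then (I_m − Q₂Q₂ᵀ)(I_m − Q₁Q₁ᵀ) = I_m − [Q₁ Q₂] · T · [Q₁ Q₂]ᵀ, where T is the (n₁+n₂)×(n₁+n₂) block lower unitriangular matrix with diagonal blocks I_{n₁}, I_{n₂}, lower-left block −Q₂ᵀQ₁, and upper-right block 0. -/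
open Matrix

/-- Block two-term compact projector identity. -/
theorem block_two_term_compact_projector
    (m n₁ n₂ : ℕ)
    (Q₁ : Matrix (Fin m) (Fin n₁) ℝ) (hQ₁ : Q₁ᵀ * Q₁ = 1)
    (Q₂ : Matrix (Fin m) (Fin n₂) ℝ) (hQ₂ : Q₂ᵀ * Q₂ = 1)
    (T : Matrix (Fin n₁ ⊕ Fin n₂) (Fin n₁ ⊕ Fin n₂) ℝ)
    (hT : T = fromBlocks 1 0 (-(Q₂ᵀ * Q₁)) 1) :
    (1 - Q₂ * Q₂ᵀ) * (1 - Q₁ * Q₁ᵀ) =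
      1 - fromCols Q₁ Q₂ * T * (fromCols Q₁ Q₂)ᵀ := by
  subst hT
  rw [transpose_fromCols, fromCols_mul_fromBlocks, fromCols_mul_fromRows]
  simp only [Matrix.mul_one, Matrix.one_mul, Matrix.mul_zero, Matrix.mul_neg, Matrix.neg_mul,
    Matrix.mul_add, Matrix.add_mul, Matrix.sub_mul, Matrix.mul_sub, zero_add,
    Matrix.mul_assoc]
  abel
end
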